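/- Incremental closedness: defining C_0 = ∅ and C_i = C_{i-1} ∪ {t_i} ∪ {α ∩ t_i : α ∈ C_{i-1}, α ∩ t_i ≠ ∅}, the family C_n consists exactly of the nonempty itemsets that are intersections of some nonempty subset of transactions {t_j : j ∈ S}, S ⊆ {1,...,n}, S ≠ ∅ — i.e., C_n is the set of nonempty intersection-closed itemsets generated by the transactions. -/
import Mathlib


/-- The incremental family of closed itemsets:
`C 0 = ∅`, `C (i+1) = C i ∪ {t (i+1)} ∪ {α ∩ t (i+1) : α ∈ C i, α ∩ t (i+1) ≠ ∅}`. -/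
def Cfam (t : ℕ → Finset ℕ) : ℕ → Set (Finset ℕ)
  | 0 => ∅
  | (i + 1) =>
      Cfam t i ∪ {t (i + 1)} ∪
        {β | ∃ α ∈ Cfam t i, β = α ∩ t (i + 1) ∧ β.Nonempty}

lemma inf'_insert_eq (t : ℕ → Finset ℕ) {S S' : Finset ℕ} {a : ℕ}
    (hS : S.Nonempty) (hS' : S'.Nonempty) (h : S = insert a S') :
    S.inf' hS t = t a ⊓ S'.inf' hS' t := by
  subst h; exact Finset.inf'_insert hS' t

/-- `C n` is exactly the family of nonempty intersections `⋂_{j ∈ S} t j` over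
nonempty `S ⊆ {1,…,n}`. -/
theorem stmt4 (t : ℕ → Finset ℕ) (n : ℕ) (ht : ∀ j, (t j).Nonempty) :
    Cfam t n =
      {β | ∃ (S : Finset ℕ) (hS : S.Nonempty),
        S ⊆ Finset.Icc 1 n ∧ β = S.inf' hS t ∧ β.Nonempty} := by
  induction n with
  | zero =>
    ext β
    simp only [Cfam, Set.mem_empty_iff_false, Set.mem_setOf_eq, false_iff]
    rintro ⟨S, hS, hsub, -, -⟩
    obtain ⟨j, hj⟩ := hS
    have := Finset.mem_Icc.1 (hsub hj)
    omega
  | succ n ih =>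
    ext β
    simp only [Cfam, Set.mem_union, Set.mem_singleton_iff, Set.mem_setOf_eq, ih]
    constructor
    · rintro ((⟨S, hS, hsub, hβ, hne⟩ | rfl) | ⟨α, ⟨S, hS, hsub, hα, hαne⟩, hβ, hne⟩)
      · exact ⟨S, hS, hsub.trans (Finset.Icc_subset_Icc_right (by omega)), hβ, hne⟩
      · refine ⟨{n + 1}, ⟨n + 1, by simp⟩, by simp [Finset.mem_Icc], by simp, ht _⟩
      · have hnotmem : n + 1 ∉ S := fun h => by
          have := (Finset.mem_Icc.1 (hsub h)).2; omega
        refine ⟨insert (n + 1) S, ⟨n + 1, Finset.mem_insert_self _ _⟩, ?_, ?_, hne⟩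
        · intro x hx
          rcases Finset.mem_insert.1 hx with rfl | hx
          · simp [Finset.mem_Icc]
          · have := hsub hx
            simp only [Finset.mem_Icc] at this ⊢
            omega
        · rw [Finset.inf'_insert hS, hβ, hα]
          exact Finset.inter_comm _ _
    · rintro ⟨S, hS, hsub, hβ, hne⟩
      by_cases hmem : n + 1 ∈ S
      · set S' := S.erase (n + 1) with hS'
        by_cases hS'ne : S'.Nonempty
        · right
          have hins : insert (n + 1) S' = S := Finset.insert_erase hmem
          have hβ' : β = S'.inf' hS'ne t ∩ t (n + 1) := by
            rw [hβ, inf'_insert_eq t hS hS'ne hins.symm]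
            exact Finset.inter_comm _ _
          have hα_le : β ⊆ S'.inf' hS'ne t := by
            rw [hβ']; exact Finset.inter_subset_left
          refine ⟨S'.inf' hS'ne t, ⟨S', hS'ne, ?_, rfl, hne.mono hα_le⟩, hβ', hne⟩
          intro x hx
          have hx' := Finset.mem_erase.1 hx
          have := hsub hx'.2
          simp only [Finset.mem_Icc] at this ⊢
          omega
        · left; right
          have : S = {n + 1} := by
            apply Finset.eq_singleton_iff_unique_mem.2
            refine ⟨hmem, fun x hx => ?_⟩
            by_contra hne'
            exact hS'ne ⟨x, Finset.mem_erase.2 ⟨hne', hx⟩⟩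
          subst this
          simp [hβ]
      · left; left
        refine ⟨S, hS, fun x hx => ?_, hβ, hne⟩
        have := hsub hx
        simp only [Finset.mem_Icc] at this ⊢
        have : x ≠ n + 1 := fun h => hmem (h ▸ hx)
        omega
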